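/- arXiv:1504.05547 — 2 statements merged into one kernel-verified Lean document; each statement's English description precedes it below -/
import Mathlib

section
/- Let S be a collection of k-element subsets of {1,…,n} and let (c_J)_{J∈S} be complex signs (|c_J| = 1). Define commuting operators T₁,…,T_n on the Hilbert space H with orthonormal basis {e} ∪ {e(j₁,…,j_m) : 0 ≤ m ≤ k−2, 1 ≤ j₁ ≤ ⋯ ≤ j_m ≤ n} ∪ {f₁,…,f_n} ∪ {g} by: T_l e = e(l); T_l e(j₁,…,j_m) = e[l,j₁,…,j_m] for m < k−2; T_l e(j₁,…,j_{k−2}) = ∑_i γ_{{i,l,j₁,…,j_{k−2}}} f_i; T_l f_i = δ_{l,i} g; T_l g = 0, where γ_A = c_A if A ∈ S and 0 otherwise, and [·] denotes nondecreasing reordering. Then for the polynomial p(z) = ∑_{J ∈ S} c_J z_J, we have p(T₁,…,T_n) e = |S| · g. -/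
/-- in the Dixon–Varopoulos construction (operators `T_l` acting on a Hilbert
space with orthonormal basis `e = e()`, `e(j₁,…,j_m)` (`m ≤ k-2`, encoded by multisets),
`f_i`, `g` by the listed rules), the polynomial `p(z) = ∑_{J∈S} c_J z_J` with signs `c_J`
satisfies `p(T₁,…,T_n) e = |S| · g`. -/
theorem stmt8 (n k : ℕ) (hk : 3 ≤ k)
    (H : Type*) [NormedAddCommGroup H] [InnerProductSpace ℂ H] [CompleteSpace H]
    (b : HilbertBasis (Multiset (Fin n) ⊕ (Fin n) ⊕ Unit) ℂ H)
    (S : Finset (Multiset (Fin n)))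
    (hScard : ∀ J ∈ S, Multiset.card J = k) (hSnodup : ∀ J ∈ S, J.Nodup)
    (c : Multiset (Fin n) → ℂ) (hc : ∀ J ∈ S, c J = 1 ∨ c J = -1)
    (γ : Multiset (Fin n) → ℂ) (hγ : ∀ A, γ A = if A ∈ S then c A else 0)
    (T : Fin n → H →L[ℂ] H) (hcomm : ∀ l m, Commute (T l) (T m))
    (hT1 : ∀ (l : Fin n) (s : Multiset (Fin n)), Multiset.card s < k - 2 →
      T l (b (Sum.inl s)) = b (Sum.inl (l ::ₘ s)))
    (hT2 : ∀ (l : Fin n) (s : Multiset (Fin n)), Multiset.card s = k - 2 →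
      T l (b (Sum.inl s)) = ∑ i : Fin n, γ (i ::ₘ l ::ₘ s) • b (Sum.inr (Sum.inl i)))
    (hT3 : ∀ (l i : Fin n),
      T l (b (Sum.inr (Sum.inl i))) = if l = i then b (Sum.inr (Sum.inr ())) else 0)
    (hT4 : ∀ l : Fin n, T l (b (Sum.inr (Sum.inr ()))) = 0) :
    (∑ J ∈ S, c J • (Multiset.toFinset J).noncommProd T (fun i _ j _ _ => hcomm i j))
        (b (Sum.inl 0)) = (S.card : ℂ) • b (Sum.inr (Sum.inr ())) := by
  have claimA : ∀ L : List (Fin n), L.length ≤ k - 2 →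
      (L.map T).prod (b (Sum.inl 0)) = b (Sum.inl (↑L : Multiset (Fin n))) := by
    intro L
    induction L with
    | nil => intro _; simp
    | cons a L ih =>
      intro hlen
      simp only [List.length_cons] at hlen
      simp only [List.map_cons, List.prod_cons, ContinuousLinearMap.mul_apply]
      rw [ih (by omega), hT1 a ↑L (by simpa using by omega)]
      simp
  have key : ∀ J ∈ S, (J.toFinset.noncommProd T (fun i _ j _ _ => hcomm i j))
      (b (Sum.inl 0)) = γ J • b (Sum.inr (Sum.inr ())) := by
    intro J hJ
    obtain ⟨L, hL⟩ := Quotient.exists_rep J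
    have hL' : (↑L : Multiset (Fin n)) = J := hL
    have hlen : L.length = k := by
      have := hScard J hJ; rw [← hL'] at this; simpa using this
    have hnodup : L.Nodup := by
      have := hSnodup J hJ; rw [← hL'] at this; exact this
    have hnc : J.toFinset.noncommProd T (fun i _ j _ _ => hcomm i j)
        = (L.map T).prod := by
      rw [Finset.noncommProd_congr (show J.toFinset = L.toFinset by rw [← hL']; rfl)
        (fun x _ => rfl) (fun i _ j _ _ => hcomm i j)]
      exact Finset.noncommProd_toFinset _ _ _ hnodup
    rw [hnc]
    rcases L with _ | ⟨a, L⟩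
    · simp at hlen; omega
    rcases L with _ | ⟨a', L'⟩
    · simp at hlen; omega
    simp only [List.length_cons] at hlen
    simp only [List.map_cons, List.prod_cons, ContinuousLinearMap.mul_apply]
    rw [claimA L' (by omega), hT2 a' ↑L' (by simpa using by omega)]
    rw [map_sum]
    simp only [map_smul, hT3]
    rw [Finset.sum_eq_single a]
    · simp only [if_pos rfl]
      rw [← hL']
      simp [Multiset.cons_coe]
    · intro i _ hi
      simp [Ne.symm hi]
    · simp
  rw [ContinuousLinearMap.sum_apply]
  have hterm : ∀ J ∈ S, (c J • J.toFinset.noncommProd T (fun i _ j _ _ => hcomm i j))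
      (b (Sum.inl 0)) = b (Sum.inr (Sum.inr ())) := by
    intro J hJ
    rw [ContinuousLinearMap.smul_apply, key J hJ, hγ, if_pos hJ, smul_smul]
    rcases hc J hJ with h | h <;> rw [h] <;> norm_num
  rw [Finset.sum_congr rfl hterm, Finset.sum_const, ← Nat.cast_smul_eq_nsmul ℂ]
end

section
/- With the operators T₁,…,T_n defined as in the Dixon construction from an S_p(k−1,k,n) partial Steiner system, the operators pairwise commute: T_l T_m = T_m T_l for all l, m. -/
/-- the operators of the Dixon construction from a partial Steiner system
`S_p(k-1,k,n)` pairwise commute. -/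
theorem stmt10 (n k : ℕ) (hk : 3 ≤ k)
    (H : Type*) [NormedAddCommGroup H] [InnerProductSpace ℂ H] [CompleteSpace H]
    (b : HilbertBasis (Multiset (Fin n) ⊕ (Fin n) ⊕ Unit) ℂ H)
    (S : Finset (Multiset (Fin n)))
    (hScard : ∀ J ∈ S, Multiset.card J = k) (hSnodup : ∀ J ∈ S, J.Nodup)
    (hSteiner : ∀ J ∈ S, ∀ J' ∈ S, J ≠ J' → Multiset.card (J ∩ J') ≤ k - 2)
    (c : Multiset (Fin n) → ℂ) (hc : ∀ J ∈ S, c J = 1 ∨ c J = -1)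
    (γ : Multiset (Fin n) → ℂ) (hγ : ∀ A, γ A = if A ∈ S then c A else 0)
    (T : Fin n → H →L[ℂ] H)
    (hT1 : ∀ (l : Fin n) (s : Multiset (Fin n)), Multiset.card s < k - 2 →
      T l (b (Sum.inl s)) = b (Sum.inl (l ::ₘ s)))
    (hT2 : ∀ (l : Fin n) (s : Multiset (Fin n)), Multiset.card s = k - 2 →
      T l (b (Sum.inl s)) = ∑ i : Fin n, γ (i ::ₘ l ::ₘ s) • b (Sum.inr (Sum.inl i)))
    (hT0 : ∀ (l : Fin n) (s : Multiset (Fin n)), k - 2 < Multiset.card s →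
      T l (b (Sum.inl s)) = 0)
    (hT3 : ∀ (l i : Fin n),
      T l (b (Sum.inr (Sum.inl i))) = if l = i then b (Sum.inr (Sum.inr ())) else 0)
    (hT4 : ∀ l : Fin n, T l (b (Sum.inr (Sum.inr ()))) = 0) :
    ∀ l m : Fin n, T l * T m = T m * T l := by
  intro l m
  -- it suffices to check equality on the Hilbert basis vectors
  have hd : Dense (Submodule.span ℂ (Set.range ⇑b) : Set H) :=
    Submodule.dense_iff_topologicalClosure_eq_top.mpr b.dense_span
  apply ContinuousLinearMap.ext_on hd
  rintro x ⟨i, rfl⟩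
  show T l (T m (b i)) = T m (T l (b i))
  obtain (s | i | u) := i
  · -- basis vector e(s)
    rcases lt_trichotomy (Multiset.card s) (k - 2) with h | h | h
    · rw [hT1 m s h, hT1 l s h]
      rcases eq_or_lt_of_le (Nat.succ_le_of_lt h) with h2 | h2
      · have hm : Multiset.card (m ::ₘ s) = k - 2 := by
          rw [Multiset.card_cons]; exact h2
        have hl : Multiset.card (l ::ₘ s) = k - 2 := by
          rw [Multiset.card_cons]; exact h2
        rw [hT2 l _ hm, hT2 m _ hl]
        refine Finset.sum_congr rfl fun i _ => ?_
        rw [Multiset.cons_swap l m s]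
      · have hm : Multiset.card (m ::ₘ s) < k - 2 := by
          rw [Multiset.card_cons]; exact h2
        have hl : Multiset.card (l ::ₘ s) < k - 2 := by
          rw [Multiset.card_cons]; exact h2
        rw [hT1 l _ hm, hT1 m _ hl, Multiset.cons_swap l m s]
    · rw [hT2 m s h, hT2 l s h, map_sum, map_sum]
      simp only [map_smul, hT3]
      rw [Finset.sum_eq_single l (fun i _ hi => by simp [Ne.symm hi])
          (fun h => absurd (Finset.mem_univ l) h),
        Finset.sum_eq_single m (fun i _ hi => by simp [Ne.symm hi])
          (fun h => absurd (Finset.mem_univ m) h)]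
      simp [Multiset.cons_swap l m s]
    · rw [hT0 m s h, hT0 l s h, map_zero, map_zero]
  · -- basis vector f_i
    rw [hT3, hT3]
    split_ifs <;> simp [hT4]
  · -- basis vector g
    simp [hT4]
end
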